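/- Let p₀ be a probability density on ℝ^d, let r : ℝ^d → [0,∞) be measurable with 0 < ∫ r(x) p₀(x) dx < ∞, and let R > 0 satisfy ∫_{‖x‖₂ < R} p₀^r(x) dx > 1/2. There exists a universal constant C > 0 (independent of d, p₀, r, R, u, v, y) such that for all 0 < u < v < 1 with (1−u)·v/(v−u) ≥ e and all y ∈ ℝ^d: ∫_{ℝ^d} ‖y − √(u/v)·y′‖₂ · B^r(y′|y) dy′ ≤ C·√(1 − u/v) · ( (‖y‖₂ + √u·R)/√(1−u) + √( d·log((1−u)·v/(v−u)) ) ), where B^r(y′|y) := q_v^r(y′)·K(y|y′)/q_u^r(y) with K(y|y′) := (2π(1−u/v))^{−d/2} exp(−‖y − √(u/v)·y′‖₂²/(2(1−u/v))). -/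

import Mathlib

open MeasureTheory Real

/-- The Gaussian kernel `G_t(y,x) = (2π(1−t))^{−d/2} exp(−‖y−√t·x‖²/(2(1−t)))`. -/
noncomputable def gaussKernel (d : ℕ) (t : ℝ) (y x : EuclideanSpace ℝ (Fin d)) : ℝ :=
  (2 * π * (1 - t)) ^ (-(d : ℝ) / 2) *
    Real.exp (-‖y - Real.sqrt t • x‖ ^ 2 / (2 * (1 - t)))

/-- The smoothed density `q_t(y) = ∫ p₀(x) G_t(y,x) dx`. -/
noncomputable def smoothed (d : ℕ) (p₀ : EuclideanSpace ℝ (Fin d) → ℝ) (t : ℝ)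
    (y : EuclideanSpace ℝ (Fin d)) : ℝ :=
  ∫ x, p₀ x * gaussKernel d t y x

/-- The posterior density `π_t(x|y) = p₀(x) G_t(y,x)/q_t(y)`. -/
noncomputable def post (d : ℕ) (p₀ : EuclideanSpace ℝ (Fin d) → ℝ) (t : ℝ)
    (x y : EuclideanSpace ℝ (Fin d)) : ℝ :=
  p₀ x * gaussKernel d t y x / smoothed d p₀ t y

/-- The conditional reward `ρ_t(y) = ∫ r(x) π_t(x|y) dx`. -/
noncomputable def condReward (d : ℕ) (p₀ r : EuclideanSpace ℝ (Fin d) → ℝ) (t : ℝ)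
    (y : EuclideanSpace ℝ (Fin d)) : ℝ :=
  ∫ x, r x * post d p₀ t x y

/-- The reward-reweighted density `p₀^r(x) = r(x)p₀(x)/∫ r p₀`. -/
noncomputable def reweighted (d : ℕ) (p₀ r : EuclideanSpace ℝ (Fin d) → ℝ)
    (x : EuclideanSpace ℝ (Fin d)) : ℝ :=
  r x * p₀ x / ∫ x', r x' * p₀ x'

/-- A probability density on `ℝ^d`: measurable, nonnegative, integrating to one. -/
def IsDensity {d : ℕ} (p : EuclideanSpace ℝ (Fin d) → ℝ) : Prop :=
  Measurable p ∧ (∀ x, 0 ≤ p x) ∧ ∫ x, p x = 1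


open scoped RealInnerProductSpace

section Aux

variable {d : ℕ}

lemma gaussKernel_nonneg {t : ℝ} (ht : t ≤ 1) (y x : EuclideanSpace ℝ (Fin d)) :
    0 ≤ gaussKernel d t y x := by
  unfold gaussKernel
  have : (0:ℝ) ≤ 2 * π * (1 - t) := by nlinarith [pi_pos]
  positivity

lemma gaussKernel_le {t : ℝ} (ht : t ≤ 1) (y x : EuclideanSpace ℝ (Fin d)) :
    gaussKernel d t y x ≤ (2 * π * (1 - t)) ^ (-(d : ℝ) / 2) := by
  unfold gaussKernel
  have h0 : (0:ℝ) ≤ 2 * π * (1 - t) := by nlinarith [pi_pos]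
  have he : rexp (-‖y - Real.sqrt t • x‖ ^ 2 / (2 * (1 - t))) ≤ 1 := by
    rw [Real.exp_le_one_iff]
    apply div_nonpos_of_nonpos_of_nonneg
    · simp [sq_nonneg]
    · nlinarith
  nlinarith [Real.rpow_nonneg h0 (-(d:ℝ)/2), Real.exp_nonneg (-‖y - Real.sqrt t • x‖ ^ 2 / (2 * (1 - t)))]

lemma gaussKernel_continuous (t : ℝ) :
    Continuous (fun zz : EuclideanSpace ℝ (Fin d) × EuclideanSpace ℝ (Fin d) =>
      gaussKernel d t zz.1 zz.2) := by
  unfold gaussKernel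
  fun_prop

lemma gaussKernel_continuous_left (t : ℝ) (x : EuclideanSpace ℝ (Fin d)) :
    Continuous (fun y' : EuclideanSpace ℝ (Fin d) => gaussKernel d t y' x) :=
  by unfold gaussKernel; fun_prop

lemma gaussKernel_continuous_right (t : ℝ) (y : EuclideanSpace ℝ (Fin d)) :
    Continuous (fun x : EuclideanSpace ℝ (Fin d) => gaussKernel d t y x) := by
  unfold gaussKernel; fun_prop



lemma integrable_gauss0 {b : ℝ} (hb : 0 < b) :
    Integrable (fun z : EuclideanSpace ℝ (Fin d) => rexp (-b * ‖z‖^2)) := by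
  have h := (GaussianFourier.integrable_cexp_neg_mul_sq_norm_add
    (V := EuclideanSpace ℝ (Fin d)) (b := (b:ℂ)) (by simpa using hb) 0 0).norm
  refine h.congr (Filter.Eventually.of_forall fun z => ?_)
  simp [Complex.norm_exp, ← Complex.ofReal_pow]

lemma integrable_gauss {b : ℝ} (hb : 0 < b) (c : EuclideanSpace ℝ (Fin d)) :
    Integrable (fun z : EuclideanSpace ℝ (Fin d) => rexp (-b * ‖z - c‖^2)) :=
  (integrable_gauss0 hb).comp_sub_right c

lemma integral_gauss {b : ℝ} (hb : 0 < b) (c : EuclideanSpace ℝ (Fin d)) :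
    ∫ z : EuclideanSpace ℝ (Fin d), rexp (-b * ‖z - c‖^2) = (π/b) ^ ((d:ℝ)/2) := by
  rw [integral_sub_right_eq_self (fun z => rexp (-b * ‖z‖^2)) c,
    GaussianFourier.integral_rexp_neg_mul_sq_norm hb, finrank_euclideanSpace_fin]

set_option maxHeartbeats 1000000 in
lemma exponent_eq {u v s : ℝ} (hu0 : 0 < u) (huv : u < v) (hv1 : v < 1)
    (hs : s = u / v) (x y y' : EuclideanSpace ℝ (Fin d)) :
    ‖y' - Real.sqrt v • x‖^2 / (2*(1-v)) + ‖y - Real.sqrt s • y'‖^2 / (2*(1-s))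
      = ((1-u)/(2*(1-v)*(1-s))) *
          ‖y' - (((1-s)*Real.sqrt v/(1-u)) • x + ((1-v)*Real.sqrt s/(1-u)) • y)‖^2
        + ‖y - Real.sqrt u • x‖^2 / (2*(1-u)) := by
  have hv0 : 0 < v := hu0.trans huv
  have hs0 : 0 < s := hs ▸ div_pos hu0 hv0
  have hs1 : s < 1 := by rw [hs]; exact (div_lt_one hv0).2 huv
  have husv : u = s * v := by rw [hs]; field_simp
  have e3 : Real.sqrt u = Real.sqrt s * Real.sqrt v := by
    rw [husv, Real.sqrt_mul hs0.le]
  have e1 : Real.sqrt v ^ 2 = v := Real.sq_sqrt hv0.le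
  have e2 : Real.sqrt s ^ 2 = s := Real.sq_sqrt hs0.le
  have d1 : 1 - v ≠ 0 := by nlinarith
  have d2 : 1 - s ≠ 0 := by nlinarith
  have du : 1 - u ≠ 0 := by nlinarith
  simp only [norm_sub_sq_real, norm_add_sq_real, real_inner_smul_right, real_inner_smul_left,
    inner_add_right, norm_smul, Real.norm_eq_abs, abs_of_nonneg (Real.sqrt_nonneg _), mul_pow,
    e1, e2, e3, sq_abs]
  rw [real_inner_comm y' y, real_inner_comm y x]
  set A := Real.sqrt v with hA
  set B := Real.sqrt s with hB
  rw [husv, ← e1, ← e2]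
  have dd1 : 1 - A^2 ≠ 0 := by rw [e1]; exact d1
  have dd2 : 1 - B^2 ≠ 0 := by rw [e2]; exact d2
  have ddu : 1 - B^2*A^2 ≠ 0 := by rw [e2, e1, ← husv]; exact du
  have ddu' : 1 - A^2*B^2 ≠ 0 := by rw [mul_comm]; exact ddu
  field_simp
  ring

lemma const_mul_rpow {P1 P2 P3 : ℝ} (h1 : 0 < P1) (h2 : 0 < P2) (h3 : 0 < P3) (E : ℝ) :
    P1^(-E) * P2^(-E) * (P1*P2/P3)^E = P3^(-E) := by
  rw [Real.div_rpow (by positivity) h3.le, Real.mul_rpow h1.le h2.le, Real.rpow_neg h1.le,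
    Real.rpow_neg h2.le, Real.rpow_neg h3.le]
  have n1 : P1 ^ E ≠ 0 := ne_of_gt (Real.rpow_pos_of_pos h1 _)
  have n2 : P2 ^ E ≠ 0 := ne_of_gt (Real.rpow_pos_of_pos h2 _)
  have n3 : P3 ^ E ≠ 0 := ne_of_gt (Real.rpow_pos_of_pos h3 _)
  field_simp

lemma ck {u v : ℝ} (hu0 : 0 < u) (huv : u < v) (hv1 : v < 1)
    (x y : EuclideanSpace ℝ (Fin d)) :
    ∫ y', gaussKernel d v y' x * gaussKernel d (u/v) y y' = gaussKernel d u y x := by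
  have hv0 : 0 < v := hu0.trans huv
  obtain ⟨s, hs⟩ : ∃ s, s = u / v := ⟨_, rfl⟩
  rw [← hs]
  have hs0 : 0 < s := hs ▸ div_pos hu0 hv0
  have hs1 : s < 1 := hs ▸ (div_lt_one hv0).2 huv
  have hu1 : u < 1 := huv.trans hv1
  have h1v : (0:ℝ) < 1 - v := by linarith
  have h1s : (0:ℝ) < 1 - s := by linarith
  have h1u : (0:ℝ) < 1 - u := by linarith
  have hπ : (0:ℝ) < π := pi_pos
  set a := (1-u)/(2*(1-v)*(1-s)) with ha
  have ha0 : 0 < a := by positivity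
  set μ := ((1-s)*Real.sqrt v/(1-u)) • x + ((1-v)*Real.sqrt s/(1-u)) • y with hμ
  have hpt : ∀ y', gaussKernel d v y' x * gaussKernel d s y y'
      = ((2*π*(1-v))^(-((d:ℝ)/2)) * (2*π*(1-s))^(-((d:ℝ)/2)) *
          rexp (-(‖y - Real.sqrt u • x‖^2/(2*(1-u))))) * rexp (-a * ‖y' - μ‖^2) := by
    intro y'
    have key := exponent_eq hu0 huv hv1 hs x y y'
    rw [← hμ, ← ha] at key
    have e : rexp (-‖y' - Real.sqrt v • x‖^2/(2*(1-v))) * rexp (-‖y - Real.sqrt s • y'‖^2/(2*(1-s)))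
        = rexp (-(‖y - Real.sqrt u • x‖^2/(2*(1-u)))) * rexp (-a * ‖y' - μ‖^2) := by
      rw [← Real.exp_add, ← Real.exp_add]
      congr 1
      simp only [neg_div]
      linarith [key]
    simp only [gaussKernel, neg_div]
    rw [mul_mul_mul_comm]
    simp only [neg_div] at e
    rw [e]
    ring
  rw [show (fun y' => gaussKernel d v y' x * gaussKernel d s y y')
      = fun y' => ((2*π*(1-v))^(-((d:ℝ)/2)) * (2*π*(1-s))^(-((d:ℝ)/2)) *
          rexp (-(‖y - Real.sqrt u • x‖^2/(2*(1-u))))) * rexp (-a * ‖y' - μ‖^2)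
      from funext hpt]
  rw [integral_const_mul, integral_gauss ha0 μ]
  have hπa : π / a = (2*π*(1-v)) * (2*π*(1-s)) / (2*π*(1-u)) := by
    rw [ha]; field_simp
  have hconst := const_mul_rpow (P1 := 2*π*(1-v)) (P2 := 2*π*(1-s)) (P3 := 2*π*(1-u))
    (by positivity) (by positivity) (by positivity) ((d:ℝ)/2)
  simp only [gaussKernel, neg_div]
  rw [hπa]
  calc (2*π*(1-v))^(-((d:ℝ)/2)) * (2*π*(1-s))^(-((d:ℝ)/2)) *
          rexp (-(‖y - Real.sqrt u • x‖^2/(2*(1-u)))) *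
        ((2*π*(1-v)) * (2*π*(1-s)) / (2*π*(1-u)))^((d:ℝ)/2)
      = ((2*π*(1-v))^(-((d:ℝ)/2)) * (2*π*(1-s))^(-((d:ℝ)/2)) *
          ((2*π*(1-v)) * (2*π*(1-s)) / (2*π*(1-u)))^((d:ℝ)/2)) *
        rexp (-(‖y - Real.sqrt u • x‖^2/(2*(1-u)))) := by ring
    _ = (2*π*(1-u))^(-((d:ℝ)/2)) * rexp (-(‖y - Real.sqrt u • x‖^2/(2*(1-u)))) := by
        rw [hconst]


lemma gaussKernel_left_eq {t : ℝ} (ht : t < 1) (x : EuclideanSpace ℝ (Fin d)) :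
    (fun y' : EuclideanSpace ℝ (Fin d) => gaussKernel d t y' x)
      = fun y' => (2 * π * (1 - t)) ^ (-(d : ℝ) / 2) *
          rexp (-(1/(2*(1-t))) * ‖y' - Real.sqrt t • x‖^2) := by
  have h1t : (0:ℝ) < 1 - t := by linarith
  funext y'
  unfold gaussKernel
  congr 1
  rw [neg_div, neg_mul, div_eq_inv_mul, one_div]

lemma integrable_gaussKernel_left {t : ℝ} (ht : t < 1) (x : EuclideanSpace ℝ (Fin d)) :
    Integrable (fun y' : EuclideanSpace ℝ (Fin d) => gaussKernel d t y' x) := by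
  have h1t : (0:ℝ) < 1 - t := by linarith
  have hb : 0 < 1/(2*(1-t)) := by positivity
  rw [gaussKernel_left_eq ht x]
  exact (integrable_gauss hb (Real.sqrt t • x)).const_mul _

lemma integral_gaussKernel_left {t : ℝ} (ht : t < 1) (x : EuclideanSpace ℝ (Fin d)) :
    ∫ y', gaussKernel d t y' x = 1 := by
  have h1t : (0:ℝ) < 1 - t := by linarith
  have hb : 0 < 1/(2*(1-t)) := by positivity
  have h0 : (0:ℝ) < 2 * π * (1 - t) := by nlinarith [pi_pos]
  rw [gaussKernel_left_eq ht x, integral_const_mul, integral_gauss hb]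
  have : π / (1/(2*(1-t))) = 2 * π * (1-t) := by field_simp
  rw [this, neg_div, Real.rpow_neg h0.le]
  field_simp

section Smoothed
variable {p : EuclideanSpace ℝ (Fin d) → ℝ}

lemma integrable_p_mul_gaussKernel (hpm : Measurable p) (hpi : Integrable p)
    {t : ℝ} (ht : t ≤ 1) (y : EuclideanSpace ℝ (Fin d)) :
    Integrable (fun x => p x * gaussKernel d t y x) := by
  refine (hpi.bdd_mul ((gaussKernel_continuous_right t y).aestronglyMeasurable)
    (c := (2 * π * (1 - t)) ^ (-(d : ℝ) / 2)) (Filter.Eventually.of_forall fun x => ?_)).congr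
    (Filter.Eventually.of_forall fun x => mul_comm _ _)
  rw [Real.norm_of_nonneg (gaussKernel_nonneg ht y x)]
  exact gaussKernel_le ht y x

lemma smoothed_nonneg (hpn : ∀ x, 0 ≤ p x) {t : ℝ} (ht : t ≤ 1)
    (y : EuclideanSpace ℝ (Fin d)) : 0 ≤ smoothed d p t y :=
  integral_nonneg fun x => mul_nonneg (hpn x) (gaussKernel_nonneg ht y x)

lemma smoothed_mass (hpm : Measurable p) (hpn : ∀ x, 0 ≤ p x) (hpi : Integrable p)
    (hp1 : ∫ x, p x = 1) {v : ℝ} (hv1 : v < 1) :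
    Integrable (fun y' => smoothed d p v y') ∧ ∫ y', smoothed d p v y' = 1 := by
  set f : EuclideanSpace ℝ (Fin d) × EuclideanSpace ℝ (Fin d) → ℝ :=
    fun z => p z.2 * gaussKernel d v z.1 z.2 with hf
  have hfm : AEStronglyMeasurable f (volume.prod volume) :=
    ((hpm.comp measurable_snd).mul ((gaussKernel_continuous v).measurable)).aestronglyMeasurable
  have hnn : ∀ z, 0 ≤ f z := fun z => mul_nonneg (hpn _) (gaussKernel_nonneg hv1.le _ _)
  have hslice : ∀ x, Integrable (fun y' => f (y', x)) := fun x =>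
    (integrable_gaussKernel_left hv1 x).const_mul (p x)
  have hints : ∀ x, (∫ y', ‖f (y', x)‖) = p x := by
    intro x
    simp_rw [show ∀ y', ‖f (y',x)‖ = f (y',x) from fun y' => Real.norm_of_nonneg (hnn _), hf]
    rw [integral_const_mul, integral_gaussKernel_left hv1 x, mul_one]
  have hint : Integrable f (volume.prod volume) := by
    rw [integrable_prod_iff' hfm]
    exact ⟨Filter.Eventually.of_forall hslice,
      hpi.congr (Filter.Eventually.of_forall fun x => (hints x).symm)⟩
  have hinner : ∀ y', (∫ x, f (y', x)) = smoothed d p v y' := fun y' => rfl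
  constructor
  · refine hint.integral_norm_prod_left.congr (Filter.Eventually.of_forall fun y' => ?_)
    simp_rw [show ∀ x, ‖f (y',x)‖ = f (y',x) from fun x => Real.norm_of_nonneg (hnn _)]
    exact hinner y'
  · have swap := MeasureTheory.integral_integral_swap (f := fun y' x => f (y', x)) hint
    calc ∫ y', smoothed d p v y' = ∫ y', ∫ x, f (y', x) := by simp_rw [hinner]
      _ = ∫ x, ∫ y', f (y', x) := swap
      _ = ∫ x, p x := by
          congr 1; funext x
          simp only [hf]
          rw [integral_const_mul, integral_gaussKernel_left hv1 x, mul_one]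
      _ = 1 := hp1

lemma smoothed_fubini (hpm : Measurable p) (hpn : ∀ x, 0 ≤ p x) (hpi : Integrable p)
    {u v : ℝ} (hu0 : 0 < u) (huv : u < v) (hv1 : v < 1)
    (y : EuclideanSpace ℝ (Fin d)) :
    Integrable (fun y' => smoothed d p v y' * gaussKernel d (u/v) y y') ∧
    ∫ y', smoothed d p v y' * gaussKernel d (u/v) y y' = smoothed d p u y := by
  have hu1 : u < 1 := huv.trans hv1
  have hs1 : u/v < 1 := (div_lt_one (hu0.trans huv)).2 huv
  set f : EuclideanSpace ℝ (Fin d) × EuclideanSpace ℝ (Fin d) → ℝ :=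
    fun z => p z.2 * (gaussKernel d v z.1 z.2 * gaussKernel d (u/v) y z.1) with hf
  have hfm : AEStronglyMeasurable f (volume.prod volume) :=
    ((hpm.comp measurable_snd).mul
      (((gaussKernel_continuous v).measurable).mul
        (((gaussKernel_continuous_right (u/v) y).measurable).comp measurable_fst))).aestronglyMeasurable
  have hnn : ∀ z, 0 ≤ f z := fun z => mul_nonneg (hpn _)
    (mul_nonneg (gaussKernel_nonneg hv1.le _ _) (gaussKernel_nonneg hs1.le _ _))
  have hslice : ∀ x, Integrable (fun y' => f (y', x)) := by
    intro x
    refine Integrable.const_mul ?_ (p x)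
    refine ((integrable_gaussKernel_left hv1 x).bdd_mul
      ((gaussKernel_continuous_right (u/v) y).aestronglyMeasurable)
      (c := (2*π*(1-u/v))^(-(d:ℝ)/2)) (Filter.Eventually.of_forall fun y' => ?_)).congr
      (Filter.Eventually.of_forall fun y' => mul_comm _ _)
    rw [Real.norm_of_nonneg (gaussKernel_nonneg hs1.le y y')]
    exact gaussKernel_le hs1.le y y'
  have hints : ∀ x, (∫ y', ‖f (y', x)‖) = p x * gaussKernel d u y x := by
    intro x
    simp_rw [show ∀ y', ‖f (y',x)‖ = f (y',x) from fun y' => Real.norm_of_nonneg (hnn _), hf]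
    rw [integral_const_mul, ck hu0 huv hv1 x y]
  have hint : Integrable f (volume.prod volume) := by
    rw [integrable_prod_iff' hfm]
    exact ⟨Filter.Eventually.of_forall hslice,
      (integrable_p_mul_gaussKernel hpm hpi hu1.le y).congr
        (Filter.Eventually.of_forall fun x => (hints x).symm)⟩
  have hinner : ∀ y', (∫ x, f (y', x)) = smoothed d p v y' * gaussKernel d (u/v) y y' := by
    intro y'
    simp_rw [hf, show ∀ x, p x * (gaussKernel d v y' x * gaussKernel d (u/v) y y')
      = (p x * gaussKernel d v y' x) * gaussKernel d (u/v) y y' from fun x => by ring]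
    rw [integral_mul_const]
    rfl
  constructor
  · refine hint.integral_norm_prod_left.congr (Filter.Eventually.of_forall fun y' => ?_)
    simp_rw [show ∀ x, ‖f (y',x)‖ = f (y',x) from fun x => Real.norm_of_nonneg (hnn _)]
    exact hinner y'
  · have swap := MeasureTheory.integral_integral_swap (f := fun y' x => f (y', x)) hint
    calc ∫ y', smoothed d p v y' * gaussKernel d (u/v) y y'
        = ∫ y', ∫ x, f (y', x) := by simp_rw [hinner]
      _ = ∫ x, ∫ y', f (y', x) := swap
      _ = ∫ x, p x * gaussKernel d u y x := by
          congr 1; funext x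
          simp only [hf]
          rw [integral_const_mul, ck hu0 huv hv1 x y]
      _ = smoothed d p u y := rfl

end Smoothed

lemma smoothed_lowerBound {p : EuclideanSpace ℝ (Fin d) → ℝ}
    (hpm : Measurable p) (hpn : ∀ x, 0 ≤ p x) (hpi : Integrable p)
    {u : ℝ} (hu0 : 0 < u) (hu1 : u < 1) {R : ℝ} (hR : 0 < R)
    (hmass : 1/2 ≤ ∫ x in {x : EuclideanSpace ℝ (Fin d) | ‖x‖ < R}, p x)
    (y : EuclideanSpace ℝ (Fin d)) :
    (2*π*(1-u)) ^ (-(d:ℝ)/2) * rexp (-(‖y‖ + Real.sqrt u * R)^2/(2*(1-u))) / 2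
      ≤ smoothed d p u y := by
  have h1u : (0:ℝ) < 1 - u := by linarith
  set M := ‖y‖ + Real.sqrt u * R with hM
  have hM0 : 0 ≤ M := by positivity
  set c := (2*π*(1-u)) ^ (-(d:ℝ)/2) * rexp (-M^2/(2*(1-u))) with hc
  have hc0 : 0 ≤ c := by
    apply mul_nonneg _ (Real.exp_nonneg _)
    apply Real.rpow_nonneg
    nlinarith [pi_pos]
  have hset : MeasurableSet {x : EuclideanSpace ℝ (Fin d) | ‖x‖ < R} :=
    measurableSet_lt (by fun_prop) measurable_const
  have hPG : Integrable (fun x => p x * gaussKernel d u y x) :=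
    integrable_p_mul_gaussKernel hpm hpi hu1.le y
  have step1 : ∫ x in {x : EuclideanSpace ℝ (Fin d) | ‖x‖ < R}, c * p x
      ≤ ∫ x in {x : EuclideanSpace ℝ (Fin d) | ‖x‖ < R}, p x * gaussKernel d u y x := by
    refine setIntegral_mono_on ((hpi.const_mul c).integrableOn) (hPG.integrableOn) hset ?_
    intro x hx
    have hx' : ‖x‖ < R := hx
    have hb : ‖y - Real.sqrt u • x‖ ≤ M := by
      calc ‖y - Real.sqrt u • x‖ ≤ ‖y‖ + ‖Real.sqrt u • x‖ := norm_sub_le _ _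
        _ = ‖y‖ + Real.sqrt u * ‖x‖ := by
            rw [norm_smul, Real.norm_eq_abs, abs_of_nonneg (Real.sqrt_nonneg u)]
        _ ≤ M := by
            rw [hM]
            have := Real.sqrt_nonneg u
            nlinarith
    have hG : c ≤ gaussKernel d u y x := by
      unfold gaussKernel
      rw [hc]
      apply mul_le_mul_of_nonneg_left _ (by
        apply Real.rpow_nonneg; nlinarith [pi_pos])
      apply Real.exp_le_exp.2
      rw [neg_div, neg_div, neg_le_neg_iff]
      have hsq : ‖y - Real.sqrt u • x‖^2 ≤ M^2 := pow_le_pow_left₀ (norm_nonneg _) hb 2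
      gcongr
    calc c * p x ≤ gaussKernel d u y x * p x := mul_le_mul_of_nonneg_right hG (hpn x)
      _ = p x * gaussKernel d u y x := mul_comm _ _
  have step2 : ∫ x in {x : EuclideanSpace ℝ (Fin d) | ‖x‖ < R}, p x * gaussKernel d u y x
      ≤ smoothed d p u y := by
    apply setIntegral_le_integral hPG
    exact Filter.Eventually.of_forall fun x =>
      mul_nonneg (hpn x) (gaussKernel_nonneg hu1.le y x)
  have step3 : c * (1/2) ≤ ∫ x in {x : EuclideanSpace ℝ (Fin d) | ‖x‖ < R}, c * p x := by
    rw [integral_const_mul]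
    exact mul_le_mul_of_nonneg_left hmass hc0
  calc (2*π*(1-u)) ^ (-(d:ℝ)/2) * rexp (-M^2/(2*(1-u))) / 2 = c * (1/2) := by rw [hc]; ring
    _ ≤ smoothed d p u y := le_trans step3 (le_trans step1 step2)

lemma tail_bound {c T t : ℝ} (hc : 0 < c) (hT2 : c ≤ T^2) (hT : 0 < T) (ht : 0 ≤ t) :
    t * rexp (-t^2/(2*c)) ≤ T * rexp (-T^2/(2*c)) + T * rexp (-t^2/(2*c)) := by
  rcases le_or_gt t T with h | h
  · have h1 : t * rexp (-t^2/(2*c)) ≤ T * rexp (-t^2/(2*c)) :=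
      mul_le_mul_of_nonneg_right h (Real.exp_nonneg _)
    nlinarith [mul_nonneg hT.le (Real.exp_nonneg (-T^2/(2*c)))]
  · have key : t ≤ T * rexp ((t^2 - T^2)/(2*c)) := by
      have h2 : (t-T)/T ≤ (t^2-T^2)/(2*c) := by
        rw [div_le_div_iff₀ hT (by positivity)]
        have h4 : (t-T)*(2*c) ≤ (t-T)*((t+T)*T) := by
          apply mul_le_mul_of_nonneg_left _ (by linarith)
          nlinarith
        nlinarith [h4]
      have h1 : 1 + (t - T)/T ≤ rexp ((t-T)/T) := by
        have := Real.add_one_le_exp ((t-T)/T)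
        linarith
      calc t = T * (1 + (t-T)/T) := by field_simp; ring
        _ ≤ T * rexp ((t-T)/T) := mul_le_mul_of_nonneg_left h1 hT.le
        _ ≤ T * rexp ((t^2-T^2)/(2*c)) :=
            mul_le_mul_of_nonneg_left (Real.exp_le_exp.2 h2) hT.le
    have h3 : t * rexp (-t^2/(2*c)) ≤ T * rexp ((t^2-T^2)/(2*c)) * rexp (-t^2/(2*c)) :=
      mul_le_mul_of_nonneg_right key (Real.exp_nonneg _)
    have e : rexp ((t^2-T^2)/(2*c)) * rexp (-t^2/(2*c)) = rexp (-T^2/(2*c)) := by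
      rw [← Real.exp_add]
      congr 1
      field_simp
      ring
    rw [mul_assoc, e] at h3
    nlinarith [mul_nonneg hT.le (Real.exp_nonneg (-t^2/(2*c)))]

lemma sqrt_sq_add_sq_le {a b : ℝ} (ha : 0 ≤ a) (hb : 0 ≤ b) :
    Real.sqrt (a^2 + b^2) ≤ a + b := by
  calc Real.sqrt (a^2+b^2) ≤ Real.sqrt ((a+b)^2) := Real.sqrt_le_sqrt (by nlinarith)
    _ = a + b := Real.sqrt_sq (by linarith)

lemma rpow_ratio {P Q' : ℝ} (hP : 0 < P) (hQ : 0 < Q') (E : ℝ) :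
    P^(-E) = Q'^(-E) * (Q'/P)^E := by
  rw [Real.div_rpow hQ.le hP.le, Real.rpow_neg hP.le, Real.rpow_neg hQ.le]
  have n1 : P ^ E ≠ 0 := ne_of_gt (Real.rpow_pos_of_pos hP _)
  have n2 : Q' ^ E ≠ 0 := ne_of_gt (Real.rpow_pos_of_pos hQ _)
  field_simp


end Aux

set_option maxHeartbeats 2000000 in
/-- First-moment bound on the backward kernel of the reward-reweighted
forward process: there is a universal constant `C > 0` such that for all `0 < u < v < 1`
with `(1−u)·v/(v−u) ≥ e` and all `y`,
`∫ ‖y − √(u/v)·y′‖ B^r(y′|y) dy′ ≤ C·√(1−u/v)·((‖y‖+√u·R)/√(1−u) + √(d·log((1−u)v/(v−u))))`. -/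
theorem stmt_5 :
    ∃ C : ℝ, 0 < C ∧
      ∀ (d : ℕ), 1 ≤ d →
      ∀ p₀ r : EuclideanSpace ℝ (Fin d) → ℝ,
        IsDensity p₀ → Measurable r → (∀ x, 0 ≤ r x) →
        (0 < ∫ x, r x * p₀ x) → Integrable (fun x => r x * p₀ x) →
      ∀ R : ℝ, 0 < R →
        (1 / 2 < ∫ x in {x : EuclideanSpace ℝ (Fin d) | ‖x‖ < R}, reweighted d p₀ r x) →
      ∀ u v : ℝ, 0 < u → u < v → v < 1 → Real.exp 1 ≤ (1 - u) * v / (v - u) →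
      ∀ y : EuclideanSpace ℝ (Fin d),
        (∫ y', ‖y - Real.sqrt (u / v) • y'‖ *
            (smoothed d (reweighted d p₀ r) v y' * gaussKernel d (u / v) y y' /
              smoothed d (reweighted d p₀ r) u y)) ≤
          C * Real.sqrt (1 - u / v) *
            ((‖y‖ + Real.sqrt u * R) / Real.sqrt (1 - u) +
              Real.sqrt (d * Real.log ((1 - u) * v / (v - u)))) := by
  refine ⟨3, by norm_num, ?_⟩
  intro d hd p₀ r hp₀ hrm hrn hrp hri R hR hmass u v hu0 huv hv1 hAe y
  -- basic facts
  have hv0 : 0 < v := hu0.trans huv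
  have hu1 : u < 1 := huv.trans hv1
  have hs0 : 0 < u/v := div_pos hu0 hv0
  have hs1 : u/v < 1 := (div_lt_one hv0).2 huv
  have h1u : (0:ℝ) < 1 - u := by linarith
  have h1s : (0:ℝ) < 1 - u/v := by linarith
  have hπ : (0:ℝ) < π := pi_pos
  -- the density p
  set p : EuclideanSpace ℝ (Fin d) → ℝ := reweighted d p₀ r with hp
  have hpm : Measurable p := (hrm.mul hp₀.1).div_const _
  have hpn : ∀ x, 0 ≤ p x := fun x =>
    div_nonneg (mul_nonneg (hrn x) (hp₀.2.1 x)) (le_of_lt hrp)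
  have hpi : Integrable p := hri.div_const _
  have hp1 : ∫ x, p x = 1 := by
    simp only [hp, reweighted]
    rw [integral_div, div_self (ne_of_gt hrp)]
  -- quantities
  set A := (1 - u) * v / (v - u) with hAdef
  have hvu : v - u ≠ 0 := by linarith
  have hv0' : v ≠ 0 := ne_of_gt hv0
  have h1s' : (1:ℝ) - u/v ≠ 0 := ne_of_gt h1s
  have hA : A = (1-u)/(1-u/v) := by
    rw [hAdef]
    field_simp
  have hA0 : 0 < A := lt_of_lt_of_le (Real.exp_pos 1) hAe
  set L := Real.log A with hL
  have hL1 : 1 ≤ L := by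
    rw [hL, show (1:ℝ) = Real.log (Real.exp 1) by rw [Real.log_exp]]
    exact Real.log_le_log (Real.exp_pos 1) hAe
  set M := ‖y‖ + Real.sqrt u * R with hM
  have hM0 : 0 ≤ M := by positivity
  set W := M^2/(1-u) + d*L with hW
  have hW1 : 1 ≤ W := by
    have h1 : 0 ≤ M^2/(1-u) := by positivity
    have hd1 : (1:ℝ) ≤ (d:ℝ) := by exact_mod_cast hd
    have h2 : (1:ℝ) ≤ (d:ℝ)*L :=
      le_trans (by norm_num) (mul_le_mul hd1 hL1 zero_le_one (le_trans zero_le_one hd1))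
    rw [hW]
    exact le_trans h2 (le_add_of_nonneg_left h1)
  have hW0 : 0 ≤ W := zero_le_one.trans hW1
  set T := Real.sqrt (1-u/v) * Real.sqrt W with hT
  have hT0 : 0 < T := mul_pos (Real.sqrt_pos.2 h1s) (Real.sqrt_pos.2 (by linarith))
  have hT2 : T^2 = (1-u/v) * W := by
    rw [hT, mul_pow, Real.sq_sqrt h1s.le, Real.sq_sqrt hW0]
  -- constants
  set Cs := (2*π*(1-u/v))^(-(d:ℝ)/2) with hCs
  set Cu := (2*π*(1-u))^(-(d:ℝ)/2) with hCu
  have hCs0 : 0 ≤ Cs := Real.rpow_nonneg (by positivity) _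
  have hCu0 : 0 < Cu := Real.rpow_pos_of_pos (by positivity) _
  set Q := smoothed d p u y with hQ
  set q₀ := Cu * rexp (-M^2/(2*(1-u))) / 2 with hq₀
  have hq₀0 : 0 < q₀ := by positivity
  have hQlb : q₀ ≤ Q := by
    rw [hq₀, hQ]
    have := smoothed_lowerBound hpm hpn hpi hu0 hu1 hR hmass.le y
    rw [← hM] at this
    exact this
  have hQ0 : 0 < Q := lt_of_lt_of_le hq₀0 hQlb
  set c₀ := T * rexp (-T^2/(2*(1-u/v))) * Cs with hc₀
  have hc₀0 : 0 ≤ c₀ := by positivity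
  -- Fubini facts
  obtain ⟨hΦint, hQeq⟩ := smoothed_fubini hpm hpn hpi hu0 huv hv1 y
  obtain ⟨hq1int, hq1⟩ := smoothed_mass hpm hpn hpi hp1 hv1
  -- pointwise bound
  have hqvn : ∀ y', 0 ≤ smoothed d p v y' := fun y' => smoothed_nonneg hpn hv1.le y'
  have hT2' : 1 - u/v ≤ T^2 := by
    rw [hT2]
    calc 1 - u/v = (1-u/v) * 1 := (mul_one _).symm
      _ ≤ (1-u/v) * W := mul_le_mul_of_nonneg_left hW1 h1s.le
  have hpt : ∀ y', ‖y - Real.sqrt (u/v) • y'‖ *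
      (smoothed d p v y' * gaussKernel d (u/v) y y')
      ≤ T * (smoothed d p v y' * gaussKernel d (u/v) y y') + c₀ * smoothed d p v y' := by
    intro y'
    have htb := tail_bound h1s hT2' hT0 (norm_nonneg (y - Real.sqrt (u/v) • y'))
    have h2 := mul_le_mul_of_nonneg_left htb (mul_nonneg (hqvn y') hCs0)
    have hK : gaussKernel d (u/v) y y'
        = Cs * rexp (-‖y - Real.sqrt (u/v) • y'‖^2/(2*(1-u/v))) := rfl
    calc ‖y - Real.sqrt (u/v) • y'‖ * (smoothed d p v y' * gaussKernel d (u/v) y y')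
        = (smoothed d p v y' * Cs) *
            (‖y - Real.sqrt (u/v) • y'‖ * rexp (-‖y - Real.sqrt (u/v) • y'‖^2/(2*(1-u/v)))) := by
          rw [hK]; ring
      _ ≤ (smoothed d p v y' * Cs) *
            (T * rexp (-T^2/(2*(1-u/v))) +
              T * rexp (-‖y - Real.sqrt (u/v) • y'‖^2/(2*(1-u/v)))) := h2
      _ = T * (smoothed d p v y' * gaussKernel d (u/v) y y') + c₀ * smoothed d p v y' := by
          rw [hK, hc₀]; ring
  -- integral bound
  have hN : (∫ y', ‖y - Real.sqrt (u/v) • y'‖ *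
      (smoothed d p v y' * gaussKernel d (u/v) y y')) ≤ T * Q + c₀ := by
    have hgi : Integrable (fun y' => T * (smoothed d p v y' * gaussKernel d (u/v) y y')
        + c₀ * smoothed d p v y') := (hΦint.const_mul T).add (hq1int.const_mul c₀)
    have := integral_mono_of_nonneg
      (Filter.Eventually.of_forall (fun y' => mul_nonneg (norm_nonneg _)
        (mul_nonneg (hqvn y') (gaussKernel_nonneg hs1.le y y'))))
      hgi (Filter.Eventually.of_forall hpt)
    rw [integral_add (hΦint.const_mul T) (hq1int.const_mul c₀),
      integral_const_mul, integral_const_mul, hQeq, hq1, mul_one] at this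
    exact this
  -- key constant identity : c₀ = 2 * T * q₀
  have hkey : c₀ = 2 * T * q₀ := by
    rw [hc₀, hq₀]
    have hCsu : Cs = Cu * A^((d:ℝ)/2) := by
      rw [hCs, hCu]
      simp only [neg_div]
      rw [rpow_ratio (by positivity : (0:ℝ) < 2*π*(1-u/v))
        (by positivity : (0:ℝ) < 2*π*(1-u)) ((d:ℝ)/2)]
      congr 2
      rw [hA, mul_div_mul_left _ _ (by positivity : (2*π:ℝ) ≠ 0)]
    have hee : rexp (-T ^ 2 / (2 * (1 - u / v))) * rexp (L * ((d:ℝ) / 2))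
        = rexp (-M ^ 2 / (2 * (1 - u))) := by
      rw [← Real.exp_add]
      congr 1
      rw [hT2, hW]
      field_simp
      ring
    rw [hCsu, Real.rpow_def_of_pos hA0, ← hL]
    calc T * rexp (-T^2/(2*(1-u/v))) * (Cu * rexp (L * ((d:ℝ)/2)))
        = T * Cu * (rexp (-T^2/(2*(1-u/v))) * rexp (L * ((d:ℝ)/2))) := by ring
      _ = T * Cu * rexp (-M^2/(2*(1-u))) := by rw [hee]
      _ = 2 * (T * (Cu * rexp (-M^2/(2*(1-u))) / 2)) := by ring
      _ = 2 * T * (Cu * rexp (-M ^ 2 / (2 * (1 - u))) / 2) := by ring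
  -- final assembly
  have hstep : (∫ y', ‖y - Real.sqrt (u/v) • y'‖ *
      (smoothed d p v y' * gaussKernel d (u/v) y y' / Q)) ≤ 3 * T := by
    have hrw : (fun y' => ‖y - Real.sqrt (u/v) • y'‖ *
        (smoothed d p v y' * gaussKernel d (u/v) y y' / Q))
        = fun y' => (‖y - Real.sqrt (u/v) • y'‖ *
            (smoothed d p v y' * gaussKernel d (u/v) y y')) / Q := by
      funext y'; ring
    rw [hrw, integral_div]
    have h5 : (∫ y', ‖y - Real.sqrt (u/v) • y'‖ *
        (smoothed d p v y' * gaussKernel d (u/v) y y')) / Q ≤ (T*Q + c₀)/Q :=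
      (div_le_div_iff_of_pos_right hQ0).2 hN
    have h6 : (T*Q + c₀)/Q = T + c₀/Q := by
      rw [add_div, mul_div_cancel_right₀ _ (ne_of_gt hQ0)]
    have h7 : c₀/Q ≤ c₀/q₀ := div_le_div_of_nonneg_left hc₀0 hq₀0 hQlb
    have h8 : c₀/q₀ = 2*T := by
      rw [hkey, mul_div_assoc, div_self (ne_of_gt hq₀0), mul_one]
    calc (∫ y', ‖y - Real.sqrt (u/v) • y'‖ *
          (smoothed d p v y' * gaussKernel d (u/v) y y')) / Q
        ≤ (T*Q + c₀)/Q := h5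
      _ = T + c₀/Q := h6
      _ ≤ T + c₀/q₀ := add_le_add_right h7 T
      _ = T + 2*T := by rw [h8]
      _ = 3 * T := by ring
  have hWle : Real.sqrt W ≤ M/Real.sqrt (1-u) + Real.sqrt ((d:ℝ)*L) := by
    have hdl0 : (0:ℝ) ≤ (d:ℝ)*L := mul_nonneg (Nat.cast_nonneg d) (zero_le_one.trans hL1)
    have ha : M^2/(1-u) = (M/Real.sqrt (1-u))^2 := by
      rw [div_pow, Real.sq_sqrt h1u.le]
    have hb0 : 0 ≤ M/Real.sqrt (1-u) := by positivity
    have hc0' : 0 ≤ Real.sqrt ((d:ℝ)*L) := Real.sqrt_nonneg _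
    have hdl : ((d:ℝ)*L) = (Real.sqrt ((d:ℝ)*L))^2 := (Real.sq_sqrt hdl0).symm
    rw [hW, ha]
    nth_rewrite 1 [hdl]
    exact sqrt_sq_add_sq_le hb0 hc0'
  calc (∫ y', ‖y - Real.sqrt (u/v) • y'‖ *
        (smoothed d p v y' * gaussKernel d (u/v) y y' / Q))
      ≤ 3 * T := hstep
    _ = 3 * (Real.sqrt (1-u/v) * Real.sqrt W) := by rw [hT]
    _ ≤ 3 * (Real.sqrt (1-u/v) * (M/Real.sqrt (1-u) + Real.sqrt ((d:ℝ)*L))) := by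
        gcongr
    _ = 3 * Real.sqrt (1-u/v) * (M/Real.sqrt (1-u) + Real.sqrt ((d:ℝ)*L)) := by ring
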